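/- arXiv:1203.1478 — 2 statements merged into one kernel-verified Lean document; each statement's English description precedes it below -/
import Mathlib

section
/- Assume a(s)/s^k → a_∞ and f(s)/s^p → f_∞ as s → +∞ with k, a_∞, f_∞ > 0 and p > k + 1. Set F(t) = ∫_0^t f (with f ≥ 0, f > 0 on (0,∞)), and let g solve g' = 1/√(a∘g), g(0)=0. Then the limit L := lim_{u→+∞} √(F(g(u))) ∫_u^{+∞} [∫_0^t √(F(g(s))) ds] / F(g(t))^{3/2} dt satisfies: L = 0 if p > 2k + 3, and L = +∞ if k+1 < p < 2k + 3. -/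
set_option maxHeartbeats 1000000

open Filter Topology MeasureTheory Set

private lemma mvt_ub {φ φ' : ℝ → ℝ} {a b M : ℝ} (hab : a ≤ b)
    (hd : ∀ x ∈ Icc a b, HasDerivAt φ (φ' x) x)
    (hM : ∀ x ∈ Icc a b, φ' x ≤ M) : φ b - φ a ≤ M * (b - a) := by
  have h : MonotoneOn (fun x => M * x - φ x) (Icc a b) := by
    apply monotoneOn_of_deriv_nonneg (convex_Icc a b)
    · exact (continuousOn_const.mul continuousOn_id).sub
        (fun x hx => (hd x hx).continuousAt.continuousWithinAt)
    · intro x hx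
      rw [interior_Icc] at hx
      exact (((hasDerivAt_id x).const_mul M).sub
        (hd x (Ioo_subset_Icc_self hx))).differentiableAt.differentiableWithinAt
    · intro x hx
      rw [interior_Icc] at hx
      have hlin : HasDerivAt (fun y : ℝ => M * y) M x := by
        simpa using (hasDerivAt_id x).const_mul M
      rw [show deriv (fun x => M * x - φ x) x = M - φ' x from (hlin.sub (hd x (Ioo_subset_Icc_self hx))).deriv]
      have := hM x (Ioo_subset_Icc_self hx)
      linarith
  have h2 := h (left_mem_Icc.mpr hab) (right_mem_Icc.mpr hab) hab
  simp only at h2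
  linarith

private lemma mvt_lb {φ φ' : ℝ → ℝ} {a b m : ℝ} (hab : a ≤ b)
    (hd : ∀ x ∈ Icc a b, HasDerivAt φ (φ' x) x)
    (hm : ∀ x ∈ Icc a b, m ≤ φ' x) : m * (b - a) ≤ φ b - φ a := by
  have := mvt_ub (φ := fun x => -φ x) (φ' := fun x => -φ' x) (M := -m) hab
    (fun x hx => (hd x hx).neg) (fun x hx => neg_le_neg (hm x hx))
  nlinarith [this]

private lemma asymp_bounds {h : ℝ → ℝ} {L e : ℝ} (hL : 0 < L)
    (ht : Tendsto (fun s => h s / s ^ e) atTop (𝓝 L)) :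
    ∃ S : ℝ, 1 ≤ S ∧ ∀ s ≥ S, L/2 * s ^ e ≤ h s ∧ h s ≤ 2*L * s ^ e := by
  have h1 : ∀ᶠ s in atTop, h s / s ^ e ∈ Ioo (L/2) (2*L) :=
    ht.eventually (Ioo_mem_nhds (by linarith) (by linarith))
  rcases eventually_atTop.mp (h1.and (eventually_ge_atTop (1:ℝ))) with ⟨S, hS⟩
  refine ⟨max S 1, le_max_right _ _, fun s hs => ?_⟩
  obtain ⟨⟨hlo, hhi⟩, hs1⟩ := hS s (le_trans (le_max_left _ _) hs)
  have hsp : (0:ℝ) < s := by linarith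
  have hse : 0 < s ^ e := Real.rpow_pos_of_pos hsp e
  have key : h s = h s / s ^ e * s ^ e := (div_mul_cancel₀ _ hse.ne').symm
  constructor
  · rw [key]; exact mul_le_mul_of_nonneg_right hlo.le hse.le
  · rw [key]; exact mul_le_mul_of_nonneg_right hhi.le hse.le

theorem stmt_17 (a f g : ℝ → ℝ) (ha : ContDiff ℝ 1 a) (ν : ℝ) (hν : 0 < ν)
    (hab : ∀ s, ν ≤ a s) (hf : ContDiff ℝ 1 f)
    (hf0 : ∀ s ≤ (0:ℝ), f s = 0) (hfpos : ∀ s > (0:ℝ), 0 < f s)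
    (hg : ∀ s, HasDerivAt g (1 / Real.sqrt (a (g s))) s) (hg0 : g 0 = 0)
    (k p aInf fInf : ℝ) (hk : 0 < k) (hp : k + 1 < p)
    (haInf : 0 < aInf) (hfInf : 0 < fInf)
    (haAsym : Tendsto (fun s => a s / s ^ k) atTop (𝓝 aInf))
    (hfAsym : Tendsto (fun s => f s / s ^ p) atTop (𝓝 fInf))
    (F : ℝ → ℝ) (hF : ∀ t, F t = ∫ τ in (0:ℝ)..t, f τ)
    (Φ : ℝ → ℝ)
    (hΦ : ∀ u, Φ u = Real.sqrt (F (g u)) *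
      ∫ t in Set.Ici u,
        (∫ s in (0:ℝ)..t, Real.sqrt (F (g s))) / (F (g t)) ^ ((3:ℝ)/2)) :
    (2 * k + 3 < p → Tendsto Φ atTop (𝓝 0)) ∧
    (p < 2 * k + 3 → Tendsto Φ atTop atTop) := by
  -- basic continuity/positivity
  have hfc : Continuous f := hf.continuous
  have hac : Continuous a := ha.continuous
  have hgc : Continuous g := by
    exact continuous_iff_continuousAt.mpr fun s => (hg s).continuousAt
  have hapos : ∀ y, 0 < a y := fun y => lt_of_lt_of_le hν (hab y)
  have hsqa : ∀ s, 0 < Real.sqrt (a (g s)) := fun s => Real.sqrt_pos.mpr (hapos _)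
  have hgmono : StrictMono g := by
    apply strictMono_of_deriv_pos
    intro x
    rw [(hg x).deriv]
    exact div_pos one_pos (hsqa x)
  have hgpos : ∀ s > (0:ℝ), 0 < g s := fun s hs => hg0 ▸ hgmono hs
  have hgnn : ∀ s ≥ (0:ℝ), 0 ≤ g s := by
    intro s hs
    rcases eq_or_lt_of_le hs with h | h
    · rw [← h, hg0]
    · exact (hgpos s h).le
  have hfnn : ∀ s, 0 ≤ f s := by
    intro s
    rcases le_or_gt s 0 with h | h
    · rw [hf0 s h]
    · exact (hfpos s h).le
  -- g tends to infinity
  have hgtop : Tendsto g atTop atTop := by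
    apply tendsto_atTop_atTop_of_monotone hgmono.monotone
    by_contra h
    push_neg at h
    obtain ⟨b, hb⟩ := h
    have hb0 : 0 < b := hg0 ▸ hb 0
    obtain ⟨A, hAmem, hA⟩ := (isCompact_Icc (a := (0:ℝ)) (b := b)).exists_isMaxOn
      (nonempty_Icc.mpr hb0.le) hac.continuousOn
    have hA : ∀ y ∈ Icc (0:ℝ) b, a y ≤ a A := hA
    have hApos : 0 < a A := hapos A
    have hsA : 0 < Real.sqrt (a A) := Real.sqrt_pos.mpr hApos
    set x : ℝ := Real.sqrt (a A) * b + 1 with hx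
    have hx0 : 0 ≤ x := by positivity
    have hmem : ∀ y ∈ Icc (0:ℝ) x, g y ∈ Icc (0:ℝ) b :=
      fun y hy => ⟨hgnn y hy.1, (hb y).le⟩
    have hlb : (Real.sqrt (a A))⁻¹ * (x - 0) ≤ g x - g 0 := by
      apply mvt_lb (φ' := fun s => 1 / Real.sqrt (a (g s))) hx0
        (fun y _ => hg y)
      intro y hy
      rw [one_div]
      exact inv_anti₀ (Real.sqrt_pos.mpr (hapos _))
        (Real.sqrt_le_sqrt (hA (g y) (hmem y hy)))
    rw [hg0, hx] at hlb
    have : b < g x := by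
      have h2 : (Real.sqrt (a A))⁻¹ * (Real.sqrt (a A) * b + 1 - 0) =
          b + (Real.sqrt (a A))⁻¹ := by field_simp; ring
      rw [h2] at hlb
      have : 0 < (Real.sqrt (a A))⁻¹ := by positivity
      linarith
    exact absurd (hb x) (not_lt.mpr this.le)
  -- asymptotic bounds for a and f
  obtain ⟨S₀, hS₀1, hS₀⟩ := asymp_bounds haInf haAsym
  obtain ⟨T₀, hT₀1, hT₀⟩ := asymp_bounds hfInf hfAsym
  -- power-law bounds for g
  set c : ℝ := (k+2)/2 with hc
  have hcpos : 0 < c := by rw [hc]; linarith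
  set e : ℝ := c⁻¹ with he
  have hepos : 0 < e := by rw [he]; positivity
  obtain ⟨c₁, c₂, S₂, hc₁, hc₂, hS₂1, hgbd⟩ :
      ∃ c₁ c₂ S₂ : ℝ, 0 < c₁ ∧ 0 < c₂ ∧ 1 ≤ S₂ ∧
        ∀ s ≥ S₂, c₁ * s ^ e ≤ g s ∧ g s ≤ c₂ * s ^ e := by
    obtain ⟨S₁', hS₁'⟩ := eventually_atTop.mp (hgtop.eventually_ge_atTop (max S₀ 1))
    set S₁ := max S₁' 1 with hS₁def
    have hS₁1 : (1:ℝ) ≤ S₁ := le_max_right _ _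
    have hgS : ∀ s ≥ S₁, max S₀ 1 ≤ g s := fun s hs =>
      hS₁' s (le_trans (le_max_left _ _) hs)
    set φ : ℝ → ℝ := fun s => g s ^ c with hφdef
    set m : ℝ := c / Real.sqrt (2*aInf) with hm
    set M : ℝ := c / Real.sqrt (aInf/2) with hM
    have hsq2a : 0 < Real.sqrt (2*aInf) := Real.sqrt_pos.mpr (by linarith)
    have hsqa2 : 0 < Real.sqrt (aInf/2) := Real.sqrt_pos.mpr (by linarith)
    have hmpos : 0 < m := div_pos hcpos hsq2a
    have hMpos : 0 < M := div_pos hcpos hsqa2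
    have hφd : ∀ x ≥ S₁, HasDerivAt φ (c * g x ^ (c-1) * (1 / Real.sqrt (a (g x)))) x := by
      intro x hx
      have hy1 : (1:ℝ) ≤ g x := le_trans (le_max_right _ _) (hgS x hx)
      have hgx : g x ≠ 0 := by linarith
      exact (Real.hasDerivAt_rpow_const (Or.inl hgx)).comp x (hg x)
    have hderivbd : ∀ x ≥ S₁, m ≤ c * g x ^ (c-1) * (1 / Real.sqrt (a (g x))) ∧
        c * g x ^ (c-1) * (1 / Real.sqrt (a (g x))) ≤ M := by
      intro x hx
      set y := g x with hy
      have hy1 : (1:ℝ) ≤ y := le_trans (le_max_right _ _) (hgS x hx)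
      have hy0 : (0:ℝ) < y := by linarith
      obtain ⟨hal, hau⟩ := hS₀ y (le_trans (le_max_left _ _) (hgS x hx))
      have hyk : (0:ℝ) < y ^ (k/2) := Real.rpow_pos_of_pos hy0 _
      have hsy : Real.sqrt (y ^ k) = y ^ (k/2) := by
        rw [Real.sqrt_eq_rpow, ← Real.rpow_mul hy0.le, show k * (1/2) = k/2 by ring]
      have h1 : Real.sqrt (a y) ≤ Real.sqrt (2*aInf) * y ^ (k/2) := by
        rw [← hsy, ← Real.sqrt_mul (by positivity)]
        exact Real.sqrt_le_sqrt hau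
      have h2 : Real.sqrt (aInf/2) * y ^ (k/2) ≤ Real.sqrt (a y) := by
        rw [← hsy, ← Real.sqrt_mul (by positivity)]
        exact Real.sqrt_le_sqrt hal
      have hsapos : 0 < Real.sqrt (a y) := Real.sqrt_pos.mpr (hapos y)
      have hexp : y ^ (c-1) = y ^ (k/2) := by
        congr 1
        rw [hc]; ring
      have key : c * y ^ (k/2) * (1 / Real.sqrt (a y)) = c * y ^ (k/2) / Real.sqrt (a y) := by
        ring
      rw [hexp, key]
      constructor
      · rw [hm, div_le_div_iff₀ hsq2a hsapos]
        nlinarith [h1, hcpos]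
      · rw [hM, div_le_div_iff₀ hsapos hsqa2]
        nlinarith [h2, hcpos]
    have hmvt : ∀ s ≥ S₁, m * (s - S₁) ≤ φ s - φ S₁ ∧ φ s - φ S₁ ≤ M * (s - S₁) := by
      intro s hs
      have hd : ∀ x ∈ Icc S₁ s,
          HasDerivAt φ ((fun x => c * g x ^ (c-1) * (1 / Real.sqrt (a (g x)))) x) x :=
        fun x hx => hφd x hx.1
      exact ⟨mvt_lb hs hd (fun x hx => (hderivbd x hx.1).1),
        mvt_ub hs hd (fun x hx => (hderivbd x hx.1).2)⟩
    have hφS₁nn : 0 ≤ φ S₁ := Real.rpow_nonneg (hgnn S₁ (by linarith)) c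
    refine ⟨(m/2) ^ e, (φ S₁ + M) ^ e, 2*S₁, Real.rpow_pos_of_pos (by linarith) e,
      Real.rpow_pos_of_pos (by linarith) e, by linarith, ?_⟩
    intro s hs
    have hsS₁ : S₁ ≤ s := by linarith
    have hs1 : (1:ℝ) ≤ s := by linarith
    have hs0 : (0:ℝ) < s := by linarith
    obtain ⟨hl, hu⟩ := hmvt s hsS₁
    have hφlb : m/2 * s ≤ φ s := by nlinarith [hmpos]
    have hφub : φ s ≤ (φ S₁ + M) * s := by nlinarith [hMpos, hmpos]
    have hgs : φ s ^ e = g s := by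
      simp only [hφdef, he]
      exact Real.rpow_rpow_inv (hgnn s hs0.le) hcpos.ne'
    constructor
    · rw [← hgs, ← Real.mul_rpow (by linarith : (0:ℝ) ≤ m/2) hs0.le]
      exact Real.rpow_le_rpow (by positivity) hφlb hepos.le
    · rw [← hgs, ← Real.mul_rpow (by linarith : (0:ℝ) ≤ φ S₁ + M) hs0.le]
      exact Real.rpow_le_rpow (Real.rpow_nonneg (hgnn s hs0.le) c) hφub hepos.le
  -- basic facts about F
  have hFcont : Continuous F := by
    have : (fun t => ∫ τ in (0:ℝ)..t, f τ) = F := funext fun t => (hF t).symm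
    rw [← this]
    exact intervalIntegral.continuous_primitive (fun a b => hfc.intervalIntegrable a b) 0
  have hFpos : ∀ t > (0:ℝ), 0 < F t := by
    intro t ht
    rw [hF t]
    apply intervalIntegral.intervalIntegral_pos_of_pos_on (hfc.intervalIntegrable 0 t)
      (fun x hx => hfpos x hx.1) ht
  have hFnn : ∀ t, 0 ≤ F t := by
    intro t
    rcases le_or_gt 0 t with h | h
    · rw [hF t]
      exact intervalIntegral.integral_nonneg h (fun x _ => hfnn x)
    · rw [hF t, intervalIntegral.integral_symm]
      have h0 : ∫ τ in t..(0:ℝ), f τ = ∫ _ in t..(0:ℝ), (0:ℝ) := by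
        apply intervalIntegral.integral_congr
        intro x hx
        rw [Set.uIcc_of_le h.le] at hx
        exact hf0 x hx.2
      rw [h0]
      simp
  -- power-law bounds for F
  obtain ⟨c₃, c₄, T₁, hc₃, hc₄, hT₁1, hFbd⟩ :
      ∃ c₃ c₄ T₁ : ℝ, 0 < c₃ ∧ 0 < c₄ ∧ 1 ≤ T₁ ∧
        ∀ t ≥ T₁, c₃ * t ^ (p+1) ≤ F t ∧ F t ≤ c₄ * t ^ (p+1) := by
    have hp1 : (0:ℝ) < p + 1 := by linarith
    have hf_int : ∀ A B : ℝ, IntervalIntegrable f volume A B :=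
      fun A B => hfc.intervalIntegrable A B
    have hrpow_cont : ∀ {A B : ℝ}, 1 ≤ A → A ≤ B →
        IntervalIntegrable (fun s : ℝ => s ^ p) volume A B := by
      intro A B hA hAB
      apply ContinuousOn.intervalIntegrable
      intro x hx
      rw [Set.uIcc_of_le hAB] at hx
      have : x ≠ 0 := by have := hx.1; intro h; rw [h] at this; linarith
      exact (Real.continuousAt_rpow_const x p (Or.inl this)).continuousWithinAt
    have hrpowint : ∀ {A B : ℝ}, 1 ≤ A → A ≤ B →
        ∫ s in A..B, s ^ p = (B^(p+1) - A^(p+1))/(p+1) := by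
      intro A B _ _
      rw [integral_rpow (Or.inl (by linarith : (-1:ℝ) < p))]
    have one_le_rpow : ∀ {t r : ℝ}, 1 ≤ t → 0 ≤ r → 1 ≤ t ^ r := by
      intro t r ht hr
      calc (1:ℝ) = t ^ (0:ℝ) := (Real.rpow_zero t).symm
        _ ≤ t ^ r := Real.rpow_le_rpow_of_exponent_le ht hr
    have hFT₀nn : 0 ≤ F T₀ := hFnn T₀
    refine ⟨fInf/(4*(p+1)), F T₀ + 2*fInf/(p+1), 2*T₀, by positivity, by positivity,
      by linarith, ?_⟩
    intro t ht
    have htT₀ : T₀ ≤ t := by linarith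
    have ht1 : (1:ℝ) ≤ t := by linarith
    have hXnn : (0:ℝ) ≤ t ^ (p+1) := Real.rpow_nonneg (by linarith) _
    have hX1 : (1:ℝ) ≤ t ^ (p+1) := one_le_rpow ht1 hp1.le
    have hYnn : (0:ℝ) ≤ T₀ ^ (p+1) := Real.rpow_nonneg (by linarith) _
    have hsplit : F t = F T₀ + ∫ s in T₀..t, f s := by
      rw [hF t, hF T₀, intervalIntegral.integral_add_adjacent_intervals
        (hf_int 0 T₀) (hf_int T₀ t)]
    -- half bound
    have hhalf : T₀ ^ (p+1) ≤ t ^ (p+1) / 2 := by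
      have h1 : T₀ ≤ t/2 := by linarith
      have h2 : T₀^(p+1) ≤ (t/2)^(p+1) := Real.rpow_le_rpow (by linarith) h1 (by linarith)
      have h3 : (t/2:ℝ)^(p+1) = t^(p+1) * (1/2:ℝ)^(p+1) := by
        rw [show (t/2:ℝ) = t * (1/2) by ring, Real.mul_rpow (by linarith) (by norm_num)]
      have h4 : (1/2:ℝ)^(p+1) ≤ (1/2:ℝ)^(1:ℝ) :=
        Real.rpow_le_rpow_of_exponent_ge (by norm_num) (by norm_num) (by linarith)
      rw [Real.rpow_one] at h4
      have h5 : (0:ℝ) ≤ (1/2:ℝ)^(p+1) := Real.rpow_nonneg (by norm_num) _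
      nlinarith [hXnn]
    constructor
    · -- lower bound
      have hige : ∫ s in T₀..t, f s ≥ ∫ s in T₀..t, fInf/2 * s ^ p := by
        apply intervalIntegral.integral_mono_on htT₀
          ((hrpow_cont hT₀1 htT₀).const_mul _) (hf_int T₀ t)
        intro x hx
        exact (hT₀ x hx.1).1
      have hival : ∫ s in T₀..t, fInf/2 * s ^ p
          = fInf/2 * ((t^(p+1) - T₀^(p+1))/(p+1)) := by
        rw [intervalIntegral.integral_const_mul, hrpowint hT₀1 htT₀]
      rw [hival] at hige
      have key : fInf/(4*(p+1)) * t^(p+1) ≤ fInf/2 * ((t^(p+1) - T₀^(p+1))/(p+1)) := by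
        have h6 : t^(p+1)/2 ≤ t^(p+1) - T₀^(p+1) := by linarith
        have heq : fInf/(4*(p+1)) * t^(p+1) = fInf/2 * (t^(p+1)/2/(p+1)) := by
          field_simp
          ring
        rw [heq]
        gcongr
      rw [hsplit]
      linarith
    · -- upper bound
      have hile : ∫ s in T₀..t, f s ≤ ∫ s in T₀..t, 2*fInf * s ^ p := by
        apply intervalIntegral.integral_mono_on htT₀ (hf_int T₀ t)
          ((hrpow_cont hT₀1 htT₀).const_mul _)
        intro x hx
        exact (hT₀ x hx.1).2
      have hival : ∫ s in T₀..t, 2*fInf * s ^ p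
          = 2*fInf * ((t^(p+1) - T₀^(p+1))/(p+1)) := by
        rw [intervalIntegral.integral_const_mul, hrpowint hT₀1 htT₀]
      rw [hival] at hile
      have key : 2*fInf * ((t^(p+1) - T₀^(p+1))/(p+1)) ≤ 2*fInf/(p+1) * t^(p+1) := by
        have heq : 2*fInf/(p+1) * t^(p+1) = 2*fInf * (t^(p+1)/(p+1)) := by
          field_simp
        rw [heq]
        gcongr
        linarith
      rw [hsplit]
      nlinarith [mul_nonneg hFT₀nn (by linarith : (0:ℝ) ≤ t^(p+1) - 1),
        mul_nonneg (by positivity : (0:ℝ) ≤ 2*fInf/(p+1)) hXnn]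
  -- power-law bounds for H = F ∘ g
  set β : ℝ := e * (p+1) with hβdef
  have hβ : 2 < β := by
    have h1 : β = 2*(p+1)/(k+2) := by
      rw [hβdef, he, hc]; field_simp
    rw [h1, lt_div_iff₀ (by linarith : (0:ℝ) < k+2)]
    linarith
  obtain ⟨d₁, d₂, U, hd₁, hd₂, hU1, hHbd⟩ :
      ∃ d₁ d₂ U : ℝ, 0 < d₁ ∧ 0 < d₂ ∧ 1 ≤ U ∧
        ∀ t ≥ U, d₁ * t ^ β ≤ F (g t) ∧ F (g t) ≤ d₂ * t ^ β := by
    obtain ⟨U₁, hU₁⟩ := eventually_atTop.mp (hgtop.eventually_ge_atTop T₁)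
    refine ⟨c₃ * c₁^(p+1), c₄ * c₂^(p+1), max (max S₂ U₁) 1, by positivity, by positivity,
      le_max_right _ _, ?_⟩
    intro t ht
    have htS₂ : S₂ ≤ t := le_trans (le_trans (le_max_left _ _) (le_max_left _ _)) ht
    have ht1 : (1:ℝ) ≤ t := le_trans (le_max_right _ _) ht
    have ht0 : (0:ℝ) < t := by linarith
    obtain ⟨hgl, hgu⟩ := hgbd t htS₂
    have hgT₁ : T₁ ≤ g t := hU₁ t (le_trans (le_trans (le_max_right _ _) (le_max_left _ _)) ht)
    obtain ⟨hFl, hFu⟩ := hFbd (g t) hgT₁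
    have hte : (0:ℝ) < t ^ e := Real.rpow_pos_of_pos ht0 e
    have hrw : ∀ {d : ℝ}, 0 ≤ d → (d * t^e)^(p+1) = d^(p+1) * t^β := by
      intro d hd
      rw [Real.mul_rpow hd hte.le, hβdef, Real.rpow_mul ht0.le]
    constructor
    · calc c₃*c₁^(p+1) * t^β = c₃ * (c₁ * t^e)^(p+1) := by rw [hrw hc₁.le]; ring
        _ ≤ c₃ * (g t)^(p+1) := by
            apply mul_le_mul_of_nonneg_left _ hc₃.le
            exact Real.rpow_le_rpow (by positivity) hgl (by linarith)
        _ ≤ F (g t) := hFl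
    · calc F (g t) ≤ c₄ * (g t)^(p+1) := hFu
        _ ≤ c₄ * (c₂ * t^e)^(p+1) := by
            apply mul_le_mul_of_nonneg_left _ hc₄.le
            exact Real.rpow_le_rpow (hgnn t ht0.le) hgu (by linarith)
        _ = c₄*c₂^(p+1) * t^β := by rw [hrw hc₂.le]; ring
  -- bounds for the inner integral I
  set q : ℝ := β/2 + 1 with hq
  have hq2 : 2 ≤ q := by rw [hq]; linarith
  have hsqHc0 : Continuous (fun s => Real.sqrt (F (g s))) :=
    Real.continuous_sqrt.comp (hFcont.comp hgc)
  obtain ⟨e₁, e₂, U₂, he₁, he₂, hIbd⟩ :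
      ∃ e₁ e₂ U₂ : ℝ, 0 < e₁ ∧ 0 < e₂ ∧
        ∀ t ≥ U₂, 1 ≤ t ∧ (e₁ * t ^ q ≤ ∫ s in (0:ℝ)..t, Real.sqrt (F (g s))) ∧
          (∫ s in (0:ℝ)..t, Real.sqrt (F (g s))) ≤ e₂ * t ^ q ∧
          d₁ * t ^ β ≤ F (g t) ∧ F (g t) ≤ d₂ * t ^ β := by
    have hqpos : (0:ℝ) < q := by linarith
    have hU0 : (0:ℝ) < U := by linarith
    have hsqHc : Continuous (fun s => Real.sqrt (F (g s))) :=
      Real.continuous_sqrt.comp (hFcont.comp hgc)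
    have hsqd : ∀ {d s : ℝ}, 0 ≤ d → 0 < s →
        Real.sqrt (d * s^β) = Real.sqrt d * s^(β/2) := by
      intro d s hd hs
      rw [Real.sqrt_mul hd, Real.sqrt_eq_rpow (s^β), ← Real.rpow_mul hs.le,
        show β*(1/2) = β/2 by ring]
    have hrpow_cont : ∀ {A B : ℝ}, 1 ≤ A → A ≤ B →
        IntervalIntegrable (fun s : ℝ => s ^ (β/2)) volume A B := by
      intro A B hA hAB
      apply ContinuousOn.intervalIntegrable
      intro x hx
      rw [Set.uIcc_of_le hAB] at hx
      have : x ≠ 0 := by have := hx.1; intro h; rw [h] at this; linarith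
      exact (Real.continuousAt_rpow_const x (β/2) (Or.inl this)).continuousWithinAt
    have hsd₁ : (0:ℝ) < Real.sqrt d₁ := Real.sqrt_pos.mpr hd₁
    have hsd₂ : (0:ℝ) < Real.sqrt d₂ := Real.sqrt_pos.mpr hd₂
    have hIUnn : 0 ≤ ∫ s in (0:ℝ)..U, Real.sqrt (F (g s)) :=
      intervalIntegral.integral_nonneg hU0.le (fun x _ => Real.sqrt_nonneg _)
    refine ⟨Real.sqrt d₁/(2*q), (∫ s in (0:ℝ)..U, Real.sqrt (F (g s))) + Real.sqrt d₂/q,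
      2*U, by positivity, by positivity, ?_⟩
    intro t ht
    have htU : U ≤ t := by linarith
    have ht1 : (1:ℝ) ≤ t := by linarith
    have ht0 : (0:ℝ) < t := by linarith
    have hXnn : (0:ℝ) ≤ t ^ q := Real.rpow_nonneg ht0.le _
    have hX1 : (1:ℝ) ≤ t ^ q := by
      calc (1:ℝ) = t ^ (0:ℝ) := (Real.rpow_zero t).symm
        _ ≤ t ^ q := Real.rpow_le_rpow_of_exponent_le ht1 hqpos.le
    have hUq : (0:ℝ) ≤ U ^ q := Real.rpow_nonneg hU0.le _
    have hsplit : (∫ s in (0:ℝ)..t, Real.sqrt (F (g s)))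
        = (∫ s in (0:ℝ)..U, Real.sqrt (F (g s))) + ∫ s in U..t, Real.sqrt (F (g s)) := by
      rw [intervalIntegral.integral_add_adjacent_intervals
        (hsqHc.intervalIntegrable 0 U) (hsqHc.intervalIntegrable U t)]
    have hrpowint : ∫ s in U..t, s ^ (β/2) = (t^q - U^q)/q := by
      rw [integral_rpow (Or.inl (by linarith : (-1:ℝ) < β/2)), hq]
    have hhalf : U ^ q ≤ t ^ q / 2 := by
      have h1 : U ≤ t/2 := by linarith
      have h2 : U^q ≤ (t/2)^q := Real.rpow_le_rpow hU0.le h1 hqpos.le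
      have h3 : (t/2:ℝ)^q = t^q * (1/2:ℝ)^q := by
        rw [show (t/2:ℝ) = t * (1/2) by ring, Real.mul_rpow ht0.le (by norm_num)]
      have h4 : (1/2:ℝ)^q ≤ (1/2:ℝ)^(1:ℝ) :=
        Real.rpow_le_rpow_of_exponent_ge (by norm_num) (by norm_num) (by linarith)
      rw [Real.rpow_one] at h4
      have h5 : (0:ℝ) ≤ (1/2:ℝ)^q := Real.rpow_nonneg (by norm_num) _
      nlinarith [hXnn]
    refine ⟨ht1, ?_, ?_, (hHbd t htU).1, (hHbd t htU).2⟩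
    · -- lower bound on inner integral
      have hige : (∫ s in U..t, Real.sqrt (F (g s))) ≥ ∫ s in U..t, Real.sqrt d₁ * s^(β/2) := by
        apply intervalIntegral.integral_mono_on htU
          ((hrpow_cont hU1 htU).const_mul _) (hsqHc.intervalIntegrable U t)
        intro x hx
        have hx1 : (1:ℝ) ≤ x := le_trans hU1 hx.1
        rw [← hsqd hd₁.le (by linarith : (0:ℝ) < x)]
        exact Real.sqrt_le_sqrt (hHbd x hx.1).1
      rw [intervalIntegral.integral_const_mul, hrpowint] at hige
      have key : Real.sqrt d₁/(2*q) * t^q ≤ Real.sqrt d₁ * ((t^q - U^q)/q) := by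
        have heq : Real.sqrt d₁/(2*q) * t^q = Real.sqrt d₁ * (t^q/2/q) := by
          field_simp
        rw [heq]
        gcongr
        linarith
      rw [hsplit]
      linarith
    · -- upper bound on inner integral
      have hile : (∫ s in U..t, Real.sqrt (F (g s))) ≤ ∫ s in U..t, Real.sqrt d₂ * s^(β/2) := by
        apply intervalIntegral.integral_mono_on htU (hsqHc.intervalIntegrable U t)
          ((hrpow_cont hU1 htU).const_mul _)
        intro x hx
        have hx1 : (1:ℝ) ≤ x := le_trans hU1 hx.1
        rw [← hsqd hd₂.le (by linarith : (0:ℝ) < x)]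
        exact Real.sqrt_le_sqrt (hHbd x hx.1).2
      rw [intervalIntegral.integral_const_mul, hrpowint] at hile
      have key : Real.sqrt d₂ * ((t^q - U^q)/q) ≤ Real.sqrt d₂/q * t^q := by
        have heq : Real.sqrt d₂/q * t^q = Real.sqrt d₂ * (t^q/q) := by
          field_simp
        rw [heq]
        gcongr
        linarith
      rw [hsplit]
      nlinarith [mul_nonneg hIUnn (by linarith : (0:ℝ) ≤ t^q - 1),
        mul_nonneg (by positivity : (0:ℝ) ≤ Real.sqrt d₂/q) hXnn]
  -- outer integral analysis
  have hIcont : Continuous (fun t => ∫ s in (0:ℝ)..t, Real.sqrt (F (g s))) :=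
    intervalIntegral.continuous_primitive (fun a b => hsqHc0.intervalIntegrable a b) 0
  have hβeq : β = 2*(p+1)/(k+2) := by
    rw [hβdef, he, hc]; field_simp
  set ψ : ℝ → ℝ :=
    fun t => (∫ s in (0:ℝ)..t, Real.sqrt (F (g s))) / (F (g t)) ^ ((3:ℝ)/2) with hψdef
  set D₁ : ℝ := d₁ ^ ((3:ℝ)/2) with hD₁def
  set D₂ : ℝ := d₂ ^ ((3:ℝ)/2) with hD₂def
  have hD₁ : 0 < D₁ := Real.rpow_pos_of_pos hd₁ _
  have hD₂ : 0 < D₂ := Real.rpow_pos_of_pos hd₂ _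
  set C₁ : ℝ := e₁ / D₂ with hC₁def
  set C₂ : ℝ := e₂ / D₁ with hC₂def
  have hC₁ : 0 < C₁ := div_pos he₁ hD₂
  have hC₂ : 0 < C₂ := div_pos he₂ hD₁
  have hHpos : ∀ t ≥ U₂, 0 < F (g t) := by
    intro t ht
    obtain ⟨ht1, -, -, hHl, -⟩ := hIbd t ht
    have h0 : 0 < d₁ * t^β := by
      have : (0:ℝ) < t := by linarith
      positivity
    linarith
  -- pointwise bounds on ψ
  have hψbd : ∀ t ≥ U₂, C₁ * t^((1:ℝ)-β) ≤ ψ t ∧ ψ t ≤ C₂ * t^((1:ℝ)-β) := by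
    intro t ht
    obtain ⟨ht1, hIl, hIu, hHl, hHu⟩ := hIbd t ht
    have ht0 : (0:ℝ) < t := by linarith
    have htβ : (0:ℝ) ≤ t ^ β := Real.rpow_nonneg ht0.le β
    have hmul₁ : (d₁ * t^β)^((3:ℝ)/2) = D₁ * t^(β*(3/2)) := by
      rw [Real.mul_rpow hd₁.le htβ, ← Real.rpow_mul ht0.le]
    have hmul₂ : (d₂ * t^β)^((3:ℝ)/2) = D₂ * t^(β*(3/2)) := by
      rw [Real.mul_rpow hd₂.le htβ, ← Real.rpow_mul ht0.le]
    have hden_lb : D₁ * t^(β*(3/2)) ≤ (F (g t))^((3:ℝ)/2) := by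
      rw [← hmul₁]
      exact Real.rpow_le_rpow (by positivity) hHl (by norm_num)
    have hden_ub : (F (g t))^((3:ℝ)/2) ≤ D₂ * t^(β*(3/2)) := by
      rw [← hmul₂]
      exact Real.rpow_le_rpow (hFnn _) hHu (by norm_num)
    have hdenpos₁ : (0:ℝ) < D₁ * t^(β*(3/2)) := by positivity
    have hdenpos₂ : (0:ℝ) < D₂ * t^(β*(3/2)) := by positivity
    have hFgpow : (0:ℝ) < (F (g t))^((3:ℝ)/2) := lt_of_lt_of_le hdenpos₁ hden_lb
    have hnumnn : (0:ℝ) ≤ ∫ s in (0:ℝ)..t, Real.sqrt (F (g s)) := by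
      have : (0:ℝ) ≤ e₁ * t^q := by positivity
      linarith
    have hsplitq : t^q = t^((1:ℝ)-β) * t^(β*(3/2)) := by
      rw [← Real.rpow_add ht0, show (1:ℝ)-β + β*(3/2) = q by rw [hq]; ring]
    have htpow_ne : t^(β*(3/2)) ≠ 0 := (Real.rpow_pos_of_pos ht0 _).ne'
    constructor
    · have h1 : (e₁*t^q)/(D₂*t^(β*(3/2))) ≤ ψ t :=
        div_le_div₀ hnumnn hIl hFgpow hden_ub
      have h2 : (e₁*t^q)/(D₂*t^(β*(3/2))) = C₁*t^((1:ℝ)-β) := by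
        rw [hsplitq, hC₁def]
        field_simp
      linarith [h2 ▸ h1]
    · have h1 : ψ t ≤ (e₂*t^q)/(D₁*t^(β*(3/2))) :=
        div_le_div₀ (by positivity) hIu hdenpos₁ hden_lb
      have h2 : (e₂*t^q)/(D₁*t^(β*(3/2))) = C₂*t^((1:ℝ)-β) := by
        rw [hsplitq, hC₂def]
        field_simp
      linarith [h2 ▸ h1]
  have h1β : (1:ℝ)-β < -1 := by linarith
  -- integrability
  have hbound_int : ∀ u ≥ U₂, IntegrableOn (fun t => t^((1:ℝ)-β)) (Set.Ici u) := by
    intro u hu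
    have hu1 : (1:ℝ) ≤ u := (hIbd u hu).1
    rw [integrableOn_Ici_iff_integrableOn_Ioi]
    exact integrableOn_Ioi_rpow_of_lt h1β (by linarith)
  have hψcont : ∀ u ≥ U₂, ContinuousOn ψ (Set.Ici u) := by
    intro u hu
    apply ContinuousOn.div hIcont.continuousOn
    · intro t ht'
      have htU₂ : U₂ ≤ t := le_trans hu ht'
      have hinner : ContinuousAt (fun t => F (g t)) t :=
        hFcont.continuousAt.comp hgc.continuousAt
      exact (ContinuousAt.rpow_const hinner
        (Or.inl (hHpos t htU₂).ne')).continuousWithinAt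
    · intro t ht'
      have htU₂ : U₂ ≤ t := le_trans hu ht'
      exact (Real.rpow_pos_of_pos (hHpos t htU₂) _).ne'
  have hψint : ∀ u ≥ U₂, IntegrableOn ψ (Set.Ici u) := by
    intro u hu
    apply Integrable.mono' ((hbound_int u hu).const_mul C₂)
      (((hψcont u hu).mono Set.Subset.rfl).aestronglyMeasurable measurableSet_Ici)
    filter_upwards [ae_restrict_mem measurableSet_Ici] with t ht'
    have htU₂ : U₂ ≤ t := le_trans hu ht'
    obtain ⟨hl, hu'⟩ := hψbd t htU₂
    have ht0 : (0:ℝ) < t := by have := (hIbd t htU₂).1; linarith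
    have hψnn : 0 ≤ ψ t := le_trans (by positivity) hl
    rw [Real.norm_eq_abs, abs_of_nonneg hψnn]
    exact hu'
  -- value of the comparison integral
  have hcompval : ∀ u ≥ U₂, ∫ t in Set.Ici u, t^((1:ℝ)-β) = u^((2:ℝ)-β)/(β-2) := by
    intro u hu
    have hu1 : (1:ℝ) ≤ u := (hIbd u hu).1
    rw [integral_Ici_eq_integral_Ioi, integral_Ioi_rpow_of_lt h1β (by linarith : (0:ℝ) < u),
      show (1:ℝ)-β+1 = (2:ℝ)-β by ring]
    rw [div_eq_div_iff (by linarith) (by linarith)]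
    ring
  -- bounds on Φ
  have hΦbd : ∀ u ≥ U₂, Real.sqrt d₁ * C₁/(β-2) * u^((2:ℝ)-β/2) ≤ Φ u ∧
      Φ u ≤ Real.sqrt d₂ * C₂/(β-2) * u^((2:ℝ)-β/2) := by
    intro u hu
    obtain ⟨hu1, -, -, hHl, hHu⟩ := hIbd u hu
    have hu0 : (0:ℝ) < u := by linarith
    have hJl : C₁ * (u^((2:ℝ)-β)/(β-2)) ≤ ∫ t in Set.Ici u, ψ t := by
      have h := setIntegral_mono_on ((hbound_int u hu).const_mul C₁) (hψint u hu)
        measurableSet_Ici (fun t ht' => (hψbd t (le_trans hu ht')).1)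
      rwa [integral_const_mul, hcompval u hu] at h
    have hJu : (∫ t in Set.Ici u, ψ t) ≤ C₂ * (u^((2:ℝ)-β)/(β-2)) := by
      have h := setIntegral_mono_on (hψint u hu) ((hbound_int u hu).const_mul C₂)
        measurableSet_Ici (fun t ht' => (hψbd t (le_trans hu ht')).2)
      rwa [integral_const_mul, hcompval u hu] at h
    have hJnn : (0:ℝ) ≤ ∫ t in Set.Ici u, ψ t := by
      have : (0:ℝ) < C₁ * (u^((2:ℝ)-β)/(β-2)) :=
        mul_pos hC₁ (div_pos (Real.rpow_pos_of_pos hu0 _) (by linarith))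
      linarith
    have hsq : ∀ {d : ℝ}, 0 ≤ d → Real.sqrt (d * u^β) = Real.sqrt d * u^(β/2) := by
      intro d hd
      rw [Real.sqrt_mul hd, Real.sqrt_eq_rpow (u^β), ← Real.rpow_mul hu0.le,
        show β*(1/2) = β/2 by ring]
    have hsql : Real.sqrt d₁ * u^(β/2) ≤ Real.sqrt (F (g u)) := by
      rw [← hsq hd₁.le]; exact Real.sqrt_le_sqrt hHl
    have hsqu : Real.sqrt (F (g u)) ≤ Real.sqrt d₂ * u^(β/2) := by
      rw [← hsq hd₂.le]; exact Real.sqrt_le_sqrt hHu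
    have hexp : u^(β/2) * u^((2:ℝ)-β) = u^((2:ℝ)-β/2) := by
      rw [← Real.rpow_add hu0, show β/2 + ((2:ℝ)-β) = (2:ℝ)-β/2 by ring]
    have hrwΦ : Φ u = Real.sqrt (F (g u)) * ∫ t in Set.Ici u, ψ t := hΦ u
    constructor
    · calc Real.sqrt d₁ * C₁/(β-2) * u^((2:ℝ)-β/2)
          = (Real.sqrt d₁ * u^(β/2)) * (C₁ * (u^((2:ℝ)-β)/(β-2))) := by
            rw [← hexp]; ring
        _ ≤ Real.sqrt (F (g u)) * ∫ t in Set.Ici u, ψ t := by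
            exact mul_le_mul hsql hJl
              (mul_pos hC₁ (div_pos (Real.rpow_pos_of_pos hu0 _) (by linarith))).le
              (Real.sqrt_nonneg _)
        _ = Φ u := hrwΦ.symm
    · calc Φ u = Real.sqrt (F (g u)) * ∫ t in Set.Ici u, ψ t := hrwΦ
        _ ≤ (Real.sqrt d₂ * u^(β/2)) * (C₂ * (u^((2:ℝ)-β)/(β-2))) := by
            apply mul_le_mul hsqu hJu hJnn (by positivity)
        _ = Real.sqrt d₂ * C₂/(β-2) * u^((2:ℝ)-β/2) := by
            rw [← hexp]; ring
  set L₁ : ℝ := Real.sqrt d₁ * C₁/(β-2) with hL₁def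
  set L₂ : ℝ := Real.sqrt d₂ * C₂/(β-2) with hL₂def
  have hL₁ : 0 < L₁ :=
    div_pos (mul_pos (Real.sqrt_pos.mpr hd₁) hC₁) (by linarith)
  have hL₂ : 0 < L₂ :=
    div_pos (mul_pos (Real.sqrt_pos.mpr hd₂) hC₂) (by linarith)
  constructor
  · -- p > 2k+3 : Φ → 0
    intro hcase
    have hexpneg : (2:ℝ)-β/2 < 0 := by
      have h4 : 4 < β := by
        rw [hβeq, lt_div_iff₀ (by linarith : (0:ℝ) < k+2)]
        linarith
      linarith
    have hlim : Tendsto (fun u : ℝ => L₂ * u^((2:ℝ)-β/2)) atTop (𝓝 0) := by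
      have h := tendsto_rpow_neg_atTop (show (0:ℝ) < β/2-2 by linarith)
      have heq : (fun u : ℝ => u ^ (-(β/2-2))) = fun u : ℝ => u^((2:ℝ)-β/2) := by
        funext u; norm_num
      rw [heq] at h
      simpa using h.const_mul L₂
    apply squeeze_zero' ?_ ?_ hlim
    · filter_upwards [eventually_ge_atTop U₂] with u hu
      have hu0 : (0:ℝ) < u := by have := (hIbd u hu).1; linarith
      have := (hΦbd u hu).1
      have hpos : (0:ℝ) < L₁ * u^((2:ℝ)-β/2) := by positivity
      linarith
    · filter_upwards [eventually_ge_atTop U₂] with u hu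
      exact (hΦbd u hu).2
  · -- p < 2k+3 : Φ → ∞
    intro hcase
    have hexppos : (0:ℝ) < (2:ℝ)-β/2 := by
      have h4 : β < 4 := by
        rw [hβeq, div_lt_iff₀ (by linarith : (0:ℝ) < k+2)]
        linarith
      linarith
    apply tendsto_atTop_mono' atTop ?_
      ((tendsto_rpow_atTop hexppos).const_mul_atTop hL₁)
    filter_upwards [eventually_ge_atTop U₂] with u hu
    exact (hΦbd u hu).1
end

section
/- Assume a(s)/s^k → a_∞ and f(s)/s^p → f_∞ as s → +∞ with k, a_∞, f_∞ > 0 and p > k+1, f ≥ 0 vanishing on (-∞,0] and positive on (0,∞). Let F(t) = ∫_0^t f, g solve g' = 1/√(a∘g), g(0)=0, and define B(w) = f(g(w)) g'(w)/√(2F(g(w))) and Λ(w) = [∫_0^w √(2F(g(s))) ds]/F(g(w)). Then lim_{w→+∞} B(w)Λ(w) = 2(p+1)/(p+k+3), and lim_{w→+∞} Λ(w) = 0. -/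
open Filter Topology MeasureTheory

lemma bound_aux (H h : ℝ → ℝ) (β d S : ℝ) (hS : 0 < S) (hβ : 0 < β + 1)
    (hd : ∀ w, S ≤ w → HasDerivAt H (h w) w)
    (hb : ∀ s, S ≤ s → h s ≤ d * s ^ β) :
    ∀ w, S ≤ w → H w - H S ≤ d / (β + 1) * (w ^ (β + 1) - S ^ (β + 1)) := by
  intro w hw
  set u : ℝ → ℝ := fun x => d / (β + 1) * x ^ (β + 1) - H x with hu
  have hud : ∀ x ∈ Set.Ici S, HasDerivAt u (d * x ^ β - h x) x := by
    intro x hx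
    have hx0 : 0 < x := lt_of_lt_of_le hS hx
    have h1 : HasDerivAt (fun y : ℝ => y ^ (β + 1)) ((β + 1) * x ^ β) x := by
      have := Real.hasDerivAt_rpow_const (x := x) (p := β + 1) (Or.inl hx0.ne')
      simpa [add_sub_cancel_right] using this
    have h2 := (h1.const_mul (d / (β + 1))).sub (hd x hx)
    refine h2.congr_deriv ?_
    rw [← mul_assoc, div_mul_cancel₀ _ hβ.ne']
  have hmono : MonotoneOn u (Set.Ici S) := by
    apply monotoneOn_of_deriv_nonneg (convex_Ici S)
    · exact fun x hx => ((hud x hx).differentiableAt).continuousAt.continuousWithinAt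
    · intro x hx
      rw [interior_Ici] at hx
      exact ((hud x (Set.mem_Ici.mpr (le_of_lt hx))).differentiableAt).differentiableWithinAt
    · intro x hx
      rw [interior_Ici] at hx
      rw [(hud x (Set.mem_Ici.mpr hx.le)).deriv]
      have := hb x hx.le
      linarith
  have h3 := hmono Set.self_mem_Ici (show w ∈ Set.Ici S from hw) hw
  simp only [hu] at h3
  linarith

lemma key (H h : ℝ → ℝ) (β c w₀ : ℝ) (hβ : 0 < β + 1)
    (hd : ∀ w, w₀ ≤ w → HasDerivAt H (h w) w)
    (hh : Tendsto (fun s => h s / s ^ β) atTop (𝓝 c)) :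
    Tendsto (fun w => H w / w ^ (β + 1)) atTop (𝓝 (c / (β + 1))) := by
  rw [Metric.tendsto_nhds]
  intro ε' hε'
  set D := ε' / 3 with hD
  have hε3 : ε' = 3 * D := by rw [hD]; ring
  have hDpos : 0 < D := by positivity
  set ε := D * (β + 1) with hε
  have hεpos : 0 < ε := by positivity
  have h1 : ∀ᶠ s in atTop, |h s / s ^ β - c| < ε := by
    have := (Metric.tendsto_nhds.mp hh) ε hεpos
    simpa [Real.dist_eq] using this
  obtain ⟨S₀, hS₀⟩ := eventually_atTop.mp h1
  set S := max S₀ (max 1 w₀) with hSdef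
  have hSpos : 0 < S := lt_of_lt_of_le one_pos (le_trans (le_max_left 1 w₀) (le_max_right _ _))
  have hSw₀ : w₀ ≤ S := le_trans (le_max_right 1 w₀) (le_max_right _ _)
  set cc := c / (β + 1) with hcc
  have hup : ∀ s, S ≤ s → h s ≤ ((cc + D) * (β + 1)) * s ^ β := by
    intro s hs
    have hs0 : 0 < s := lt_of_lt_of_le hSpos hs
    have hsp : 0 < s ^ β := Real.rpow_pos_of_pos hs0 β
    have h0 := abs_sub_lt_iff.mp (hS₀ s (le_trans (le_max_left _ _) hs))
    have h2 : h s / s ^ β < c + ε := by linarith [h0.1]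
    have h3 : h s < (c + ε) * s ^ β := (div_lt_iff₀ hsp).mp h2
    have h4 : (cc + D) * (β + 1) = c + ε := by rw [hcc, hε, add_mul, div_mul_cancel₀ _ hβ.ne']
    rw [h4]; exact h3.le
  have hlo : ∀ s, S ≤ s → -h s ≤ ((D - cc) * (β + 1)) * s ^ β := by
    intro s hs
    have hs0 : 0 < s := lt_of_lt_of_le hSpos hs
    have hsp : 0 < s ^ β := Real.rpow_pos_of_pos hs0 β
    have h0 := abs_sub_lt_iff.mp (hS₀ s (le_trans (le_max_left _ _) hs))
    have h2 : c - ε < h s / s ^ β := by linarith [h0.2]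
    have h3 : (c - ε) * s ^ β < h s := (lt_div_iff₀ hsp).mp h2
    have hEq : ((D - cc) * (β + 1)) = -(c - ε) := by rw [hcc, hε, sub_mul, div_mul_cancel₀ _ hβ.ne']; ring
    rw [hEq]; nlinarith
  have hA := bound_aux H h β ((cc + D) * (β + 1)) S hSpos hβ
      (fun w hw => hd w (le_trans hSw₀ hw)) hup
  have hB := bound_aux (fun x => -H x) (fun x => -h x) β ((D - cc) * (β + 1)) S hSpos hβ
      (fun w hw => (hd w (le_trans hSw₀ hw)).neg) hlo
  set T := S ^ (β + 1) with hT
  have hTpos : 0 < T := Real.rpow_pos_of_pos hSpos _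
  set K := |H S| + |cc| * T + D * T with hK
  have hKnn : 0 ≤ K := by positivity
  have hWev : ∀ᶠ w in atTop, (K + 1) / D ≤ w ^ (β + 1) :=
    (tendsto_rpow_atTop hβ).eventually_ge_atTop _
  filter_upwards [eventually_ge_atTop S, hWev] with w hw hWbig
  have hw0 : 0 < w := lt_of_lt_of_le hSpos hw
  set W := w ^ (β + 1) with hW
  have hWpos : 0 < W := Real.rpow_pos_of_pos hw0 _
  have hA' : H w - H S ≤ cc * W + D * W - cc * T - D * T := by
    have h5 := hA w hw
    have hEq : ((cc + D) * (β + 1)) / (β + 1) * (W - T)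
        = cc * W + D * W - cc * T - D * T := by field_simp; ring
    rw [hEq] at h5; exact h5
  have hB' : H S - H w ≤ D * W - cc * W - D * T + cc * T := by
    have h5 := hB w hw
    have hEq : ((D - cc) * (β + 1)) / (β + 1) * (W - T)
        = D * W - cc * W - D * T + cc * T := by field_simp; ring
    rw [hEq] at h5
    have h6 : -H w - (-H S) ≤ D * W - cc * W - D * T + cc * T := h5
    linarith
  have hDT : 0 < D * T := mul_pos hDpos hTpos
  have hKW : K < 2 * (D * W) := by
    rw [div_le_iff₀ hDpos] at hWbig
    nlinarith
  have hccT1 : -(|cc| * T) ≤ cc * T := by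
    have := mul_le_mul_of_nonneg_right (neg_abs_le cc) hTpos.le
    linarith
  have hccT2 : cc * T ≤ |cc| * T := mul_le_mul_of_nonneg_right (le_abs_self cc) hTpos.le
  have hHS1 : H S ≤ |H S| := le_abs_self _
  have hHS2 : -|H S| ≤ H S := neg_abs_le _
  rw [Real.dist_eq, abs_sub_lt_iff]
  constructor
  · have h6 : H w / W < cc + ε' := by
      rw [div_lt_iff₀ hWpos]
      have hEq : (cc + ε') * W = cc * W + 3 * (D * W) := by rw [hε3]; ring
      rw [hEq]
      linarith
    linarith
  · have h6 : cc - ε' < H w / W := by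
      rw [lt_div_iff₀ hWpos]
      have hEq : (cc - ε') * W = cc * W - 3 * (D * W) := by rw [hε3]; ring
      rw [hEq]
      linarith
    linarith

lemma sqrt_rpow' (x : ℝ) (hx : 0 ≤ x) (q : ℝ) :
    Real.sqrt (x ^ q) = x ^ (q / 2) := by
  rw [Real.sqrt_eq_rpow, ← Real.rpow_mul hx, mul_one_div]

set_option maxHeartbeats 2000000 in
theorem stmt_19 (a f g : ℝ → ℝ) (ha : ContDiff ℝ 1 a) (ν : ℝ) (hν : 0 < ν)
    (hab : ∀ s, ν ≤ a s) (hf : ContDiff ℝ 1 f)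
    (hf0 : ∀ s ≤ (0:ℝ), f s = 0) (hfpos : ∀ s > (0:ℝ), 0 < f s)
    (hg : ∀ s, HasDerivAt g (1 / Real.sqrt (a (g s))) s) (hg0 : g 0 = 0)
    (k p aInf fInf : ℝ) (hk : 0 < k) (hp : k + 1 < p)
    (haInf : 0 < aInf) (hfInf : 0 < fInf)
    (haAsym : Tendsto (fun s => a s / s ^ k) atTop (𝓝 aInf))
    (hfAsym : Tendsto (fun s => f s / s ^ p) atTop (𝓝 fInf))
    (F : ℝ → ℝ) (hF : ∀ t, F t = ∫ τ in (0:ℝ)..t, f τ)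
    (B Λ : ℝ → ℝ)
    (hB : ∀ w, B w = f (g w) * deriv g w / Real.sqrt (2 * F (g w)))
    (hΛ : ∀ w, Λ w = (∫ s in (0:ℝ)..w, Real.sqrt (2 * F (g s))) / F (g w)) :
    Tendsto (fun w => B w * Λ w) atTop (𝓝 (2 * (p + 1) / (p + k + 3))) ∧
    Tendsto Λ atTop (𝓝 0) := by
  -- basic facts
  have hfc : Continuous f := hf.continuous
  have hFd : ∀ t, HasDerivAt F (f t) t := by
    intro t
    have h1 := (hfc.integral_hasStrictDerivAt 0 t).hasDerivAt
    have h2 : F = fun t => ∫ τ in (0:ℝ)..t, f τ := funext hF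
    rw [h2]
    exact h1
  have hFcont : Continuous F :=
    Differentiable.continuous (fun t => (hFd t).differentiableAt)
  have hag : ∀ w, 0 < a (g w) := fun w => lt_of_lt_of_le hν (hab _)
  have hsqa : ∀ w, 0 < Real.sqrt (a (g w)) := fun w => Real.sqrt_pos.mpr (hag w)
  have hgd : ∀ w, deriv g w = 1 / Real.sqrt (a (g w)) := fun w => (hg w).deriv
  have hgdiff : Differentiable ℝ g := fun w => (hg w).differentiableAt
  have hgc : Continuous g := hgdiff.continuous
  have hgmono : StrictMono g := by
    apply strictMono_of_deriv_pos
    intro w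
    rw [hgd w]
    exact one_div_pos.mpr (hsqa w)
  have hgpos : ∀ w, 0 < w → 0 < g w := fun w hw => by
    have := hgmono hw
    rwa [hg0] at this
  -- g tends to infinity
  have hgtop : Tendsto g atTop atTop := by
    apply tendsto_atTop_atTop_of_monotone hgmono.monotone
    by_contra hM
    push_neg at hM
    obtain ⟨M, hgM⟩ := hM
    have hg1 : 0 < g 1 := hgpos 1 one_pos
    have hM0 : 0 ≤ M := le_of_lt (lt_trans hg1 (hgM 1))
    obtain ⟨x₀, hx₀mem, hx₀⟩ := isCompact_Icc.exists_isMaxOn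
      ⟨0, Set.left_mem_Icc.mpr hM0⟩ (ha.continuous.continuousOn)
    have hCb0 : 0 < a x₀ := lt_of_lt_of_le hν (hab x₀)
    set δ := 1 / Real.sqrt (a x₀) with hδ
    have hδ0 : 0 < δ := by positivity
    have hb1 : ∀ s, (1:ℝ) ≤ s → -(1 / Real.sqrt (a (g s))) ≤ (-δ) * s ^ (0:ℝ) := by
      intro s hs
      rw [Real.rpow_zero, mul_one]
      have hmem : g s ∈ Set.Icc 0 M := ⟨(hgpos s (by linarith)).le, (hgM s).le⟩
      have h1 : a (g s) ≤ a x₀ := hx₀ hmem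
      have h2 : Real.sqrt (a (g s)) ≤ Real.sqrt (a x₀) := Real.sqrt_le_sqrt h1
      have h3 := one_div_le_one_div_of_le (hsqa s) h2
      rw [hδ]
      linarith
    have hcon := bound_aux (fun x => -g x) (fun x => -(1 / Real.sqrt (a (g x)))) 0 (-δ) 1
      one_pos (by norm_num) (fun w _ => (hg w).neg) hb1
    set w := max 1 (1 + M / δ) with hw
    have hw1 : (1:ℝ) ≤ w := le_max_left _ _
    have h4 := hcon w hw1
    simp only [zero_add, Real.rpow_one, Real.one_rpow] at h4
    have h5 : -g w - (-g 1) ≤ -δ / 1 * (w - 1) := h4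
    have hwge : 1 + M / δ ≤ w := le_max_right _ _
    have h6 : M ≤ (w - 1) * δ := (div_le_iff₀ hδ0).mp (by linarith)
    nlinarith [hgM w]
  -- exponents and constants
  have hk2 : (0:ℝ) < k + 2 := by linarith
  set γ : ℝ := 2 / (k + 2) with hγdef
  have hγpos : 0 < γ := by positivity
  have hsqaInf : 0 < Real.sqrt aInf := Real.sqrt_pos.mpr haInf
  set l : ℝ := (k + 2) / (2 * Real.sqrt aInf) with hldef
  have hlpos : 0 < l := by positivity
  -- derivative of φ = g ^ ((k+2)/2)
  set φ : ℝ → ℝ := fun w => g w ^ ((k + 2) / 2) with hφdef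
  have hφd : ∀ w, (1:ℝ) ≤ w →
      HasDerivAt φ ((k + 2) / 2 * g w ^ (k / 2) * (1 / Real.sqrt (a (g w)))) w := by
    intro w hw
    have hgw : 0 < g w := hgpos w (by linarith)
    have h1 : HasDerivAt (fun x : ℝ => x ^ ((k + 2) / 2))
        ((k + 2) / 2 * g w ^ ((k + 2) / 2 - 1)) (g w) :=
      Real.hasDerivAt_rpow_const (Or.inl hgw.ne')
    have h2 := h1.comp w (hg w)
    have h3 : (k + 2) / 2 - 1 = k / 2 := by ring
    rw [h3] at h2
    exact h2
  have hag_lim : Tendsto (fun w => a (g w) / g w ^ k) atTop (𝓝 aInf) := haAsym.comp hgtop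
  have hsq_lim : Tendsto (fun w => Real.sqrt (a (g w) / g w ^ k)) atTop
      (𝓝 (Real.sqrt aInf)) := (Real.continuous_sqrt.tendsto aInf).comp hag_lim
  have hφ'lim : Tendsto (fun w => (k + 2) / 2 * g w ^ (k / 2) * (1 / Real.sqrt (a (g w))))
      atTop (𝓝 l) := by
    have h1 : Tendsto (fun w => (k + 2) / 2 / Real.sqrt (a (g w) / g w ^ k)) atTop
        (𝓝 ((k + 2) / 2 / Real.sqrt aInf)) :=
      (tendsto_const_nhds (x := (k + 2) / 2) (f := atTop)).div hsq_lim hsqaInf.ne'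
    have h2 : (k + 2) / 2 / Real.sqrt aInf = l := by rw [hldef]; field_simp
    rw [h2] at h1
    refine Tendsto.congr' ?_ h1
    filter_upwards [eventually_gt_atTop 0] with w hw
    have hgw : 0 < g w := hgpos w hw
    have hgk : (0:ℝ) < g w ^ k := Real.rpow_pos_of_pos hgw k
    rw [Real.sqrt_div (hag w).le, sqrt_rpow' _ hgw.le]
    have hgk2 : (0:ℝ) < g w ^ (k / 2) := Real.rpow_pos_of_pos hgw _
    field_simp
  have hφlim : Tendsto (fun w => φ w / w) atTop (𝓝 l) := by
    have h0 : Tendsto (fun s => ((k + 2) / 2 * g s ^ (k / 2) * (1 / Real.sqrt (a (g s))))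
        / s ^ (0:ℝ)) atTop (𝓝 l) := by
      simpa [Real.rpow_zero] using hφ'lim
    have h1 := key φ _ 0 l 1 (by norm_num) hφd h0
    have h2 : l / (0 + 1) = l := by norm_num
    rw [h2] at h1
    refine Tendsto.congr' ?_ h1
    filter_upwards [] with w
    rw [show (0:ℝ) + 1 = 1 by norm_num, Real.rpow_one]
  set gInf : ℝ := l ^ γ with hgInfdef
  have hgInfpos : 0 < gInf := Real.rpow_pos_of_pos hlpos γ
  have hT2 : Tendsto (fun w => g w / w ^ γ) atTop (𝓝 gInf) := by
    have h1 := ((Real.continuousAt_rpow_const l γ (Or.inl hlpos.ne')).tendsto).comp hφlim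
    refine Tendsto.congr' ?_ h1
    filter_upwards [eventually_gt_atTop 0] with w hw
    have hgw : 0 < g w := hgpos w hw
    show (φ w / w) ^ γ = g w / w ^ γ
    rw [Real.div_rpow (Real.rpow_nonneg hgw.le _) hw.le]
    congr 1
    rw [← Real.rpow_mul hgw.le,
      show (k + 2) / 2 * γ = 1 by rw [hγdef]; field_simp, Real.rpow_one]
  have hp1 : (0:ℝ) < p + 1 := by linarith
  have hFlim : Tendsto (fun t => F t / t ^ (p + 1)) atTop (𝓝 (fInf / (p + 1))) :=
    key F f p fInf 0 (by linarith) (fun t _ => hFd t) hfAsym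
  set α : ℝ := γ * (p + 1) with hαdef
  have hα2 : 2 < α := by
    rw [hαdef, hγdef, div_mul_eq_mul_div, lt_div_iff₀ hk2]
    linarith
  have hαpos : 0 < α := by linarith
  set C : ℝ := fInf / (p + 1) * gInf ^ (p + 1) with hCdef
  have hCpos : 0 < C := mul_pos (div_pos hfInf hp1) (Real.rpow_pos_of_pos hgInfpos _)
  have hT5 : Tendsto (fun w => F (g w) / w ^ α) atTop (𝓝 C) := by
    have h1 := (hFlim.comp hgtop).mul
      (((Real.continuousAt_rpow_const gInf (p + 1) (Or.inl hgInfpos.ne')).tendsto).comp hT2)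
    rw [← hCdef] at h1
    refine Tendsto.congr' ?_ h1
    filter_upwards [eventually_gt_atTop 0] with w hw
    have hgw : 0 < g w := hgpos w hw
    simp only [Function.comp]
    rw [Real.div_rpow hgw.le (Real.rpow_nonneg hw.le _), ← Real.rpow_mul hw.le, ← hαdef]
    have h2 : (0:ℝ) < g w ^ (p + 1) := Real.rpow_pos_of_pos hgw _
    have h3 : (0:ℝ) < w ^ α := Real.rpow_pos_of_pos hw _
    field_simp
  have hFgpos : ∀ᶠ w in atTop, 0 < F (g w) := by
    have h1 : ∀ᶠ w in atTop, 0 < F (g w) / w ^ α := hT5.eventually_const_lt hCpos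
    filter_upwards [h1, eventually_gt_atTop 0] with w h2 hw
    have hwα : 0 < w ^ α := Real.rpow_pos_of_pos hw α
    have h3 := mul_pos h2 hwα
    rwa [div_mul_cancel₀ _ hwα.ne'] at h3
  -- the integral I
  set I : ℝ → ℝ := fun w => ∫ s in (0:ℝ)..w, Real.sqrt (2 * F (g s)) with hIdef
  have hIc : Continuous (fun s => Real.sqrt (2 * F (g s))) :=
    Real.continuous_sqrt.comp (continuous_const.mul (hFcont.comp hgc))
  have hId : ∀ w, HasDerivAt I (Real.sqrt (2 * F (g w))) w := fun w =>
    (hIc.integral_hasStrictDerivAt 0 w).hasDerivAt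
  have h2Cpos : (0:ℝ) < 2 * C := by linarith
  have hsq2C : 0 < Real.sqrt (2 * C) := Real.sqrt_pos.mpr h2Cpos
  have hS2 : Tendsto (fun s => Real.sqrt (2 * (F (g s) / s ^ α))) atTop
      (𝓝 (Real.sqrt (2 * C))) :=
    (Real.continuous_sqrt.tendsto (2 * C)).comp (hT5.const_mul 2)
  have hh2 : Tendsto (fun s => Real.sqrt (2 * F (g s)) / s ^ (α / 2)) atTop
      (𝓝 (Real.sqrt (2 * C))) := by
    refine Tendsto.congr' ?_ hS2
    filter_upwards [eventually_gt_atTop 0, hFgpos] with s hs hFg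
    rw [show 2 * (F (g s) / s ^ α) = 2 * F (g s) / s ^ α by ring,
      Real.sqrt_div (by linarith) _, sqrt_rpow' _ hs.le]
  set q : ℝ := α / 2 + 1 with hqdef
  have hqpos : (0:ℝ) < q := by rw [hqdef]; linarith
  have hIlim : Tendsto (fun w => I w / w ^ q) atTop
      (𝓝 (Real.sqrt (2 * C) / q)) := by
    have := key I _ (α / 2) (Real.sqrt (2 * C)) 0 (by linarith) (fun w _ => hId w) hh2
    rw [← hqdef] at this
    exact this
  -- Λ limit
  have hΛlim : Tendsto Λ atTop (𝓝 0) := by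
    have hX : Tendsto (fun w => (I w / w ^ q) / (F (g w) / w ^ α)) atTop
        (𝓝 (Real.sqrt (2 * C) / q / C)) := hIlim.div hT5 hCpos.ne'
    have hpow : Tendsto (fun w : ℝ => w ^ (q - α)) atTop (𝓝 0) := by
      have := tendsto_rpow_neg_atTop (y := α - q) (by rw [hqdef]; linarith)
      simpa [neg_sub] using this
    have h1 := hX.mul hpow
    rw [mul_zero] at h1
    refine Tendsto.congr' ?_ h1
    filter_upwards [eventually_gt_atTop 0, hFgpos] with w hw hFg
    rw [hΛ w, show (∫ s in (0:ℝ)..w, Real.sqrt (2 * F (g s))) = I w from rfl]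
    have hwq : (0:ℝ) < w ^ q := Real.rpow_pos_of_pos hw q
    have hwα : (0:ℝ) < w ^ α := Real.rpow_pos_of_pos hw α
    rw [Real.rpow_sub hw]
    field_simp
  refine ⟨?_, hΛlim⟩
  clear_value γ l φ gInf α C I q
  -- B * Λ limit
  have hT1 : Tendsto (fun w => f (g w) / g w ^ p) atTop (𝓝 fInf) := hfAsym.comp hgtop
  have hT2p : Tendsto (fun w => (g w / w ^ γ) ^ p) atTop (𝓝 (gInf ^ p)) :=
    ((Real.continuousAt_rpow_const gInf p (Or.inl hgInfpos.ne')).tendsto).comp hT2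
  have hT2k : Tendsto (fun w => (g w / w ^ γ) ^ k) atTop (𝓝 (gInf ^ k)) :=
    ((Real.continuousAt_rpow_const gInf k (Or.inl hgInfpos.ne')).tendsto).comp hT2
  have hDen1 : Tendsto (fun w => Real.sqrt (a (g w) / g w ^ k * (g w / w ^ γ) ^ k)) atTop
      (𝓝 (Real.sqrt (aInf * gInf ^ k))) :=
    (Real.continuous_sqrt.tendsto _).comp (hag_lim.mul hT2k)
  have hsD1 : 0 < Real.sqrt (aInf * gInf ^ k) :=
    Real.sqrt_pos.mpr (mul_pos haInf (Real.rpow_pos_of_pos hgInfpos k))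
  have hQ : Tendsto (fun w => f (g w) / g w ^ p * (g w / w ^ γ) ^ p
      / Real.sqrt (a (g w) / g w ^ k * (g w / w ^ γ) ^ k) * (I w / w ^ q)
      / (Real.sqrt (2 * (F (g w) / w ^ α)) * (F (g w) / w ^ α))) atTop
      (𝓝 (fInf * gInf ^ p / Real.sqrt (aInf * gInf ^ k) * (Real.sqrt (2 * C) / q)
          / (Real.sqrt (2 * C) * C))) :=
    (((hT1.mul hT2p).div hDen1 hsD1.ne').mul hIlim).div (hS2.mul hT5)
      (by positivity)
  have hLval : fInf * gInf ^ p / Real.sqrt (aInf * gInf ^ k) * (Real.sqrt (2 * C) / q)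
      / (Real.sqrt (2 * C) * C) = 2 * (p + 1) / (p + k + 3) := by
    have e1 : Real.sqrt (aInf * gInf ^ k) = Real.sqrt aInf * gInf ^ (k / 2) := by
      rw [Real.sqrt_mul haInf.le, sqrt_rpow' _ hgInfpos.le]
    have e3b : gInf ^ (k / 2 + 1) = l := by
      rw [hgInfdef, ← Real.rpow_mul hlpos.le,
        show γ * (k / 2 + 1) = 1 by rw [hγdef]; field_simp, Real.rpow_one]
    have e3 : Real.sqrt aInf * (gInf ^ (k / 2) * gInf) = (k + 2) / 2 := by
      rw [← Real.rpow_add_one hgInfpos.ne' (k / 2), e3b, hldef]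
      field_simp
    have e4 : q = (p + k + 3) / (k + 2) := by
      rw [hqdef, hαdef, hγdef]; field_simp; ring
    have hkp3 : (0:ℝ) < p + k + 3 := by linarith
    have hgp : (0:ℝ) < gInf ^ p := Real.rpow_pos_of_pos hgInfpos p
    have hgk2 : (0:ℝ) < gInf ^ (k / 2) := Real.rpow_pos_of_pos hgInfpos _
    set s2 := Real.sqrt (2 * C) with hs2def
    rw [e1, e4, hCdef, Real.rpow_add_one hgInfpos.ne' p]
    have step : fInf * gInf ^ p / (Real.sqrt aInf * gInf ^ (k / 2))
        * (s2 / ((p + k + 3) / (k + 2)))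
        / (s2 * (fInf / (p + 1) * (gInf ^ p * gInf)))
        = (p + 1) / ((Real.sqrt aInf * (gInf ^ (k / 2) * gInf)) * ((p + k + 3) / (k + 2))) := by
      field_simp
    rw [step, e3]
    field_simp
  rw [hLval] at hQ
  refine Tendsto.congr' ?_ hQ
  filter_upwards [eventually_gt_atTop 0, hFgpos] with w hw hFg
  rw [hB w, hΛ w, hgd w,
    show (∫ s in (0:ℝ)..w, Real.sqrt (2 * F (g s))) = I w from (congrFun hIdef w).symm]
  have hgw := hgpos w hw
  have hgwp : (0:ℝ) < g w ^ p := Real.rpow_pos_of_pos hgw p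
  have hgwk : (0:ℝ) < g w ^ k := Real.rpow_pos_of_pos hgw k
  have hw1 : (0:ℝ) < w ^ (γ * p) := Real.rpow_pos_of_pos hw _
  have hw2 : (0:ℝ) < w ^ (γ * k / 2) := Real.rpow_pos_of_pos hw _
  have hw3 : (0:ℝ) < w ^ q := Real.rpow_pos_of_pos hw _
  have hw4 : (0:ℝ) < w ^ (α / 2) := Real.rpow_pos_of_pos hw _
  have hw5 : (0:ℝ) < w ^ α := Real.rpow_pos_of_pos hw _
  have r1 : (g w / w ^ γ) ^ p = g w ^ p / w ^ (γ * p) := by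
    rw [Real.div_rpow hgw.le (Real.rpow_nonneg hw.le _), ← Real.rpow_mul hw.le]
  have r2 : (g w / w ^ γ) ^ k = g w ^ k / w ^ (γ * k) := by
    rw [Real.div_rpow hgw.le (Real.rpow_nonneg hw.le _), ← Real.rpow_mul hw.le]
  have r3 : a (g w) / g w ^ k * (g w ^ k / w ^ (γ * k)) = a (g w) / w ^ (γ * k) := by
    rw [div_mul_div_comm, mul_comm (a (g w)), mul_div_mul_left _ _ hgwk.ne']
  have r4 : Real.sqrt (a (g w) / w ^ (γ * k)) = Real.sqrt (a (g w)) / w ^ (γ * k / 2) := by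
    rw [Real.sqrt_div (hag w).le, sqrt_rpow' _ hw.le]
  have r5 : Real.sqrt (2 * (F (g w) / w ^ α)) = Real.sqrt (2 * F (g w)) / w ^ (α / 2) := by
    rw [show 2 * (F (g w) / w ^ α) = 2 * F (g w) / w ^ α by ring,
      Real.sqrt_div (by linarith) _, sqrt_rpow' _ hw.le]
  rw [r1, r2, r3, r4, r5]
  have hE : w ^ (γ * k / 2) * (w ^ (α / 2) * w ^ α) = w ^ (γ * p) * w ^ q := by
    rw [← Real.rpow_add hw, ← Real.rpow_add hw, ← Real.rpow_add hw]
    congr 1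
    rw [hqdef, hαdef, hγdef]
    field_simp
    ring
  have main : f (g w) / g w ^ p * (g w ^ p / w ^ (γ * p))
      / (Real.sqrt (a (g w)) / w ^ (γ * k / 2)) * (I w / w ^ q)
      / (Real.sqrt (2 * F (g w)) / w ^ (α / 2) * (F (g w) / w ^ α))
      = f (g w) * I w / (Real.sqrt (a (g w)) * Real.sqrt (2 * F (g w)) * F (g w))
        * ((w ^ (γ * k / 2) * (w ^ (α / 2) * w ^ α)) / (w ^ (γ * p) * w ^ q)) := by
    have hsa := hsqa w
    have hs2 : (0:ℝ) < Real.sqrt (2 * F (g w)) := Real.sqrt_pos.mpr (by linarith)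
    field_simp
  rw [main, hE, div_self (mul_pos hw1 hw3).ne', mul_one]
  have hsa := hsqa w
  have hs2 : (0:ℝ) < Real.sqrt (2 * F (g w)) := Real.sqrt_pos.mpr (by linarith)
  field_simp
end
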